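/- arXiv:1809.10715 — 4 statements merged into one kernel-verified Lean document; each statement's English description precedes it below -/
import Mathlib

section
/- Let H be a proper linear subspace of ℝⁿ and ◇ : 𝒦ⁿ → 𝒦ⁿ_H a monotonic map into H-symmetric compact convex sets. If ◇ is invariant on H-symmetric spherical cylinders, then for every K ∈ 𝒦ⁿ, the orthogonal projection (◇K)|H contains K|H. -/
open Set MeasureTheory Metric Pointwise

noncomputable section

/-- Euclidean space `ℝⁿ`. -/
abbrev Euc (n : ℕ) := EuclideanSpace ℝ (Fin n)

/-- The orthogonal projection onto `H`, as a self-map `x ↦ x|H` of the ambient space. -/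
def projS {n : ℕ} (H : Submodule ℝ (Euc n)) (x : Euc n) : Euc n :=
  (H.orthogonalProjectionOnto x : Euc n)

/-- The reflection with respect to the subspace `H` : `x ↦ 2(x|H) − x`. -/
def reflS {n : ℕ} (H : Submodule ℝ (Euc n)) (x : Euc n) : Euc n :=
  (2 : ℝ) • projS H x - x

/-- `A` is symmetric with respect to the subspace `H`. -/
def SymmWrt {n : ℕ} (H : Submodule ℝ (Euc n)) (A : Set (Euc n)) : Prop :=
  reflS H '' A = A

/-- The orthogonal projection `A|H` of a set `A` onto `H`. -/
def pimg {n : ℕ} (H : Submodule ℝ (Euc n)) (A : Set (Euc n)) : Set (Euc n) :=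
  projS H '' A

/-- The `H`-symmetric spherical cylinder `(r(B∩H)+x)+s(B∩H^⊥)`. -/
def cylSet {n : ℕ} (H : Submodule ℝ (Euc n)) (r s : ℝ) (x : Euc n) : Set (Euc n) :=
  (fun y => x + y) '' (r • (closedBall (0 : Euc n) 1 ∩ (H : Set (Euc n)))
    + s • (closedBall (0 : Euc n) 1 ∩ ((Hᗮ : Submodule ℝ (Euc n)) : Set (Euc n))))

/-- Convex bodies of `ℝⁿ`: compact convex sets with nonempty interior. -/
abbrev FullBody (n : ℕ) := {K : ConvexBody (Euc n) // (interior (K : Set (Euc n))).Nonempty}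

/-- `L` is a convex body in the subspace `H`: a compact convex subset of `H` with
nonempty interior relative to `H`. -/
def IsBodyIn {n : ℕ} (H : Submodule ℝ (Euc n)) (L : Set (Euc n)) : Prop :=
  L ⊆ (H : Set (Euc n)) ∧ IsCompact L ∧ Convex ℝ L ∧
    (interior (((↑) : H → Euc n) ⁻¹' L)).Nonempty

/-- Sets of special form: `L + s(B ∩ H^⊥)` with `L` a convex body in `H` and `s > 0`. -/
def SpecialForm {n : ℕ} (H : Submodule ℝ (Euc n)) (T : Set (Euc n)) : Prop :=
  ∃ (L : Set (Euc n)) (s : ℝ), IsBodyIn H L ∧ 0 < s ∧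
    T = L + s • (closedBall (0 : Euc n) 1 ∩ ((Hᗮ : Submodule ℝ (Euc n)) : Set (Euc n)))

/-- if `◇ : 𝒦ⁿ → 𝒦ⁿ_H` is monotonic and invariant on `H`-symmetric spherical
cylinders (`H` a proper subspace), then `(◇K)|H ⊇ K|H` for every `K ∈ 𝒦ⁿ`. -/
theorem stmt5 {n : ℕ} (H : Submodule ℝ (Euc n)) (hH : H ≠ ⊤)
    (dia : ConvexBody (Euc n) → ConvexBody (Euc n))
    (hcod : ∀ K, SymmWrt H (dia K : Set (Euc n)))
    (hmono : ∀ K L : ConvexBody (Euc n),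
      (K : Set (Euc n)) ⊆ (L : Set (Euc n)) → (dia K : Set (Euc n)) ⊆ (dia L : Set (Euc n)))
    (hcyl : ∀ (C : ConvexBody (Euc n)) (r s : ℝ) (x : Euc n), 0 < r → 0 < s → x ∈ H →
      (C : Set (Euc n)) = cylSet H r s x → dia C = C) :
    ∀ K : ConvexBody (Euc n), pimg H (K : Set (Euc n)) ⊆ pimg H (dia K : Set (Euc n)) := by

  intro K q hq
  obtain ⟨x, hxK, rfl⟩ := hq
  set p := projS H x with hp
  have hpH : p ∈ H := (H.orthogonalProjectionOnto x).2
  have hxpH : x - p ∈ Hᗮ := Submodule.sub_starProjection_mem_orthogonal x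
  set s : ℝ := ‖x - p‖ + 1 with hs
  have hs0 : 0 < s := by positivity
  -- the singleton body {x}
  let X : ConvexBody (Euc n) := ⟨{x}, convex_singleton x, isCompact_singleton,
    Set.singleton_nonempty x⟩
  have hXK : (X : Set (Euc n)) ⊆ (K : Set (Euc n)) := Set.singleton_subset_iff.2 hxK
  have hHcl : IsClosed (H : Set (Euc n)) := H.closed_of_finiteDimensional
  have hHocl : IsClosed ((Hᗮ : Submodule ℝ (Euc n)) : Set (Euc n)) :=
    (Hᗮ).closed_of_finiteDimensional
  -- key: dia X is inside every cylinder of radius r around p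
  have key : ∀ r : ℝ, 0 < r → (dia X : Set (Euc n)) ⊆ cylSet H r s p := by
    intro r hr
    have hA : IsCompact (r • (closedBall (0 : Euc n) 1 ∩ (H : Set (Euc n)))) :=
      ((isCompact_closedBall _ _).inter_right hHcl).smul r
    have hB : IsCompact (s • (closedBall (0 : Euc n) 1 ∩
        ((Hᗮ : Submodule ℝ (Euc n)) : Set (Euc n)))) :=
      ((isCompact_closedBall _ _).inter_right hHocl).smul s
    have hAc : Convex ℝ (r • (closedBall (0 : Euc n) 1 ∩ (H : Set (Euc n)))) :=
      ((convex_closedBall _ _).inter H.convex).smul r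
    have hBc : Convex ℝ (s • (closedBall (0 : Euc n) 1 ∩
        ((Hᗮ : Submodule ℝ (Euc n)) : Set (Euc n)))) :=
      ((convex_closedBall _ _).inter (Hᗮ).convex).smul s
    have hcomp : IsCompact (cylSet H r s p) := ((hA.add hB).image (continuous_const.add continuous_id))
    have hconv : Convex ℝ (cylSet H r s p) := (hAc.add hBc).translate p
    have h0A : (0 : Euc n) ∈ r • (closedBall (0 : Euc n) 1 ∩ (H : Set (Euc n))) := by
      have : (0 : Euc n) ∈ closedBall (0 : Euc n) 1 ∩ (H : Set (Euc n)) :=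
        ⟨mem_closedBall_self (by norm_num), H.zero_mem⟩
      simpa using Set.smul_mem_smul_set (a := r) this
    have hxpB : x - p ∈ s • (closedBall (0 : Euc n) 1 ∩
        ((Hᗮ : Submodule ℝ (Euc n)) : Set (Euc n))) := by
      have hmem : s⁻¹ • (x - p) ∈ closedBall (0 : Euc n) 1 ∩
          ((Hᗮ : Submodule ℝ (Euc n)) : Set (Euc n)) := by
        constructor
        · rw [mem_closedBall_zero_iff, norm_smul, norm_inv, Real.norm_eq_abs,
            abs_of_pos hs0]
          rw [inv_mul_le_iff₀ hs0]
          simpa [hs] using le_of_lt (lt_add_one ‖x - p‖)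
        · exact (Hᗮ).smul_mem _ hxpH
      have := Set.smul_mem_smul_set (a := s) hmem
      rwa [smul_inv_smul₀ (ne_of_gt hs0)] at this
    have hxC : x ∈ cylSet H r s p := by
      refine ⟨0 + (x - p), Set.add_mem_add h0A hxpB, by simp⟩
    have hne : (cylSet H r s p).Nonempty := ⟨x, hxC⟩
    let C : ConvexBody (Euc n) := ⟨cylSet H r s p, hconv, hcomp, hne⟩
    have hCeq : dia C = C := hcyl C r s p hr hs0 hpH rfl
    have hXC : (X : Set (Euc n)) ⊆ (C : Set (Euc n)) := Set.singleton_subset_iff.2 hxC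
    have := hmono X C hXC
    rw [hCeq] at this
    exact this
  -- any point of dia X projects to p
  obtain ⟨y, hy⟩ := (dia X).nonempty'
  have hyK : y ∈ (dia K : Set (Euc n)) := hmono X K hXK hy
  refine ⟨y, hyK, ?_⟩
  have hdist : ∀ r : ℝ, 0 < r → dist (projS H y) p ≤ r := by
    intro r hr
    obtain ⟨w, hw, hwy⟩ := key r hr hy
    obtain ⟨a, ha, b, hb, rfl⟩ := Set.mem_add.1 hw
    obtain ⟨a', ⟨ha1, ha2⟩, rfl⟩ := ha
    obtain ⟨b', ⟨hb1, hb2⟩, rfl⟩ := hb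
    have hprojy : projS H y = p + r • a' := by
      have h1 : projS H p = p := by
        simpa [projS] using congrArg (Subtype.val)
          (Submodule.orthogonalProjectionOnto_mem_subspace_eq_self (⟨p, hpH⟩ : H))
      have h2 : projS H (r • a') = r • a' := by
        simpa [projS] using congrArg (Subtype.val)
          (Submodule.orthogonalProjectionOnto_mem_subspace_eq_self (⟨r • a', H.smul_mem r ha2⟩ : H))
      have h3 : projS H (s • b') = 0 := by
        have := Submodule.orthogonalProjectionOnto_apply_of_mem_orthogonal
          ((Hᗮ).smul_mem s hb2)
        simpa [projS] using congrArg (Subtype.val) this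
      have : projS H y = projS H p + projS H (r • a') + projS H (s • b') := by
        rw [← hwy]; simp [projS, map_add, add_assoc]
      rw [this, h1, h2, h3, add_zero]
    rw [hprojy, dist_eq_norm, add_sub_cancel_left, norm_smul, Real.norm_eq_abs,
      abs_of_pos hr]
    have : ‖a'‖ ≤ 1 := mem_closedBall_zero_iff.1 ha1
    nlinarith
  have : dist (projS H y) p ≤ 0 := by
    refine le_of_forall_pos_le_add fun ε hε => ?_
    simpa using hdist ε hε
  exact dist_le_zero.1 this
end
end

section
/- Let H ∈ G_{n,i} and ◇ : 𝒦ⁿ → 𝒦ⁿ_H a monotonic symmetrization that is invariant on H-symmetric sets. Then for every affine subspace G of ℝⁿ that either contains a translate of H^⊥ or is a linear subspace of H^⊥, and every K ∈ 𝒦ⁿ with K ⊆ G, it holds ◇K ⊆ G. -/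
open Set MeasureTheory Metric Pointwise

noncomputable section

lemma aux_isCompact_convexJoin {E : Type*} [NormedAddCommGroup E] [NormedSpace ℝ E]
    {s t : Set E} (hs : IsCompact s) (ht : IsCompact t) :
    IsCompact (convexJoin ℝ s t) := by
  have heq : convexJoin ℝ s t =
      (fun p : ℝ × E × E => (1 - p.1) • p.2.1 + p.1 • p.2.2) ''
        (Icc (0:ℝ) 1 ×ˢ s ×ˢ t) := by
    ext z
    simp only [convexJoin, mem_iUnion, Set.mem_image, Set.mem_prod]
    constructor
    · rintro ⟨x, hx, y, hy, hz⟩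
      rw [segment_eq_image ℝ x y] at hz
      obtain ⟨θ, hθ, rfl⟩ := hz
      exact ⟨⟨θ, x, y⟩, ⟨hθ, hx, hy⟩, rfl⟩
    · rintro ⟨⟨θ, x, y⟩, ⟨hθ, hx, hy⟩, rfl⟩
      refine ⟨x, hx, y, hy, ?_⟩
      rw [segment_eq_image ℝ x y]
      exact ⟨θ, hθ, rfl⟩
  rw [heq]
  exact ((isCompact_Icc).prod (hs.prod ht)).image (by fun_prop)

/-- Lemma on subspaces: if `◇ : 𝒦ⁿ → 𝒦ⁿ_H` is monotonic and invariant on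
`H`-symmetric sets, and the affine subspace `G` either contains a translate of `H^⊥` or is a
linear subspace of `H^⊥`, then `K ⊆ G` implies `◇K ⊆ G`. -/
theorem stmt11 {n i : ℕ} (hin : i ≤ n - 1)
    (H : Submodule ℝ (Euc n)) (hHr : Module.finrank ℝ H = i)
    (dia : ConvexBody (Euc n) → ConvexBody (Euc n))
    (hcod : ∀ K, SymmWrt H (dia K : Set (Euc n)))
    (hmono : ∀ K L : ConvexBody (Euc n),
      (K : Set (Euc n)) ⊆ (L : Set (Euc n)) → (dia K : Set (Euc n)) ⊆ (dia L : Set (Euc n)))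
    (hinv : ∀ K : ConvexBody (Euc n), SymmWrt H (K : Set (Euc n)) → dia K = K)
    (G : AffineSubspace ℝ (Euc n))
    (hG : (∃ x : Euc n, ∀ y ∈ (Hᗮ : Submodule ℝ (Euc n)), y + x ∈ G) ∨
      ((G : Set (Euc n)) ⊆ ((Hᗮ : Submodule ℝ (Euc n)) : Set (Euc n)) ∧ (0 : Euc n) ∈ G)) :
    ∀ K : ConvexBody (Euc n), (K : Set (Euc n)) ⊆ (G : Set (Euc n)) →
      (dia K : Set (Euc n)) ⊆ (G : Set (Euc n)) := by

  intro K hKG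
  classical
  have hrefl_eq : ∀ x : Euc n, reflS H x = (Submodule.reflection H) x := by
    intro x
    rw [Submodule.reflection_apply, Submodule.starProjection_apply, reflS, projS, two_smul, two_smul]
  -- the reflection maps G into itself
  have hreflG : ∀ z ∈ (G : Set (Euc n)), reflS H z ∈ (G : Set (Euc n)) := by
    intro z hz
    rcases hG with ⟨x, hx⟩ | ⟨hsub, h0⟩
    · have hxG : x ∈ G := by simpa using hx 0 (Submodule.zero_mem _)
      have hdir : ∀ y ∈ (Hᗮ : Submodule ℝ (Euc n)), y ∈ G.direction := by
        intro y hy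
        have := AffineSubspace.vsub_mem_direction (hx y hy) hxG
        simpa using this
      have hw : z - projS H z ∈ (Hᗮ : Submodule ℝ (Euc n)) :=
        Submodule.sub_starProjection_mem_orthogonal (K := H) z
      have hmem : (-(2:ℝ)) • (z - projS H z) ∈ G.direction :=
        Submodule.smul_mem _ _ (hdir _ hw)
      have hmem2 := AffineSubspace.vadd_mem_of_mem_direction hmem hz
      have heq : (-(2:ℝ)) • (z - projS H z) +ᵥ z = reflS H z := by
        rw [reflS]
        show (-(2:ℝ)) • (z - projS H z) + z = (2:ℝ) • projS H z - z
        module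
      rwa [heq] at hmem2
    · have hz' : z ∈ (Hᗮ : Submodule ℝ (Euc n)) := hsub hz
      have hp : projS H z = 0 := by
        have := Submodule.orthogonalProjectionOnto_apply_of_mem_orthogonal hz'
        simp [projS, this]
      have hre : reflS H z = -z := by simp [reflS, hp]
      rw [hre]
      have hd : z ∈ G.direction := by
        simpa using AffineSubspace.vsub_mem_direction hz h0
      have := AffineSubspace.vadd_mem_of_mem_direction (Submodule.neg_mem _ hd) h0
      simpa using this
  have hreflcont : Continuous (reflS H) :=
    (Submodule.reflection H).continuous.congr fun x => (hrefl_eq x).symm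
  have hlin : IsLinearMap ℝ (reflS H) := by
    have : reflS H = fun x => (Submodule.reflection H).toLinearEquiv x := funext fun x => hrefl_eq x
    rw [this]
    exact (Submodule.reflection H).toLinearEquiv.toLinearMap.isLinear
  set S : Set (Euc n) := (K : Set (Euc n)) ∪ reflS H '' (K : Set (Euc n)) with hS
  have hne : (convexHull ℝ S).Nonempty := by
    obtain ⟨x, hx⟩ := K.nonempty
    exact ⟨x, subset_convexHull ℝ S (Or.inl hx)⟩
  have hScomp : IsCompact (convexHull ℝ S) := by
    rw [hS, convexHull_union K.nonempty (K.nonempty.image _),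
      K.convex.convexHull_eq, (K.convex.is_linear_image hlin).convexHull_eq]
    exact aux_isCompact_convexJoin K.isCompact (K.isCompact.image hreflcont)
  set M : ConvexBody (Euc n) :=
    ⟨convexHull ℝ S, convex_convexHull ℝ S, hScomp, hne⟩ with hM
  -- M is H-symmetric
  have hinvol : ∀ x : Euc n, reflS H (reflS H x) = x := by
    intro x; rw [hrefl_eq, hrefl_eq]; exact Submodule.reflection_reflection H x
  have hSsymm : reflS H '' S = S := by
    rw [hS, Set.image_union, Set.image_image]
    have h2 : (fun x => reflS H (reflS H x)) '' (K : Set (Euc n)) = (K : Set (Euc n)) := by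
      simp [funext hinvol]
    rw [h2, Set.union_comm]
  have hMsymm : SymmWrt H (M : Set (Euc n)) := by
    show reflS H '' convexHull ℝ S = convexHull ℝ S
    rw [hlin.image_convexHull, hSsymm]
  have hKM : (K : Set (Euc n)) ⊆ (M : Set (Euc n)) :=
    fun x hx => subset_convexHull ℝ S (Or.inl hx)
  have hMG : (M : Set (Euc n)) ⊆ (G : Set (Euc n)) := by
    apply convexHull_min _ G.convex
    rintro x (hx | ⟨y, hy, rfl⟩)
    · exact hKG hx
    · exact hreflG y (hKG hy)
  have hdiaM : dia M = M := hinv M hMsymm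
  intro x hx
  have := hmono K M hKM hx
  rw [hdiaM] at this
  exact hMG this
end
end

section
/- Let ◇ : 𝒦ⁿ → 𝒦ⁿ_{{o}} be a monotonic, mean-width-preserving symmetrization (into origin-symmetric compact convex sets) which is invariant on origin-symmetric sets and invariant under all translations (◇(K + x) = K for origin-symmetric K and any x ∈ ℝⁿ). Then ◇K = (K + (−K))/2 for every K ∈ 𝒦ⁿ, i.e., ◇ is Minkowski symmetrization with respect to {o}. -/
open Set MeasureTheory Metric Pointwise

noncomputable section

/-- The mean width `W(K) = 2∫_{S^{n-1}} h_K(u) dσ(u)`, where `σ` is the rotation invariant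
probability measure on the unit sphere (normalized `(n-1)`-dimensional Hausdorff measure)
and `h_K` is the support function of `K`. -/
def meanWidth {n : ℕ} (K : Set (Euc n)) : ℝ :=
  2 * ∫ u in sphere (0 : Euc n) 1, sSup ((fun x => (inner ℝ x u : ℝ)) '' K)
      ∂((μH[(n : ℝ) - 1] (sphere (0 : Euc n) 1))⁻¹ • μH[(n : ℝ) - 1])

/-- Theorem on characterization of Minkowski symmetrization, case `i = 0`:
a monotonic, mean-width preserving `o`-symmetrization `◇ : 𝒦ⁿ → 𝒦ⁿ_{o}` which is invariant
on `o`-symmetric sets and invariant under all translations of `o`-symmetric sets is the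
Minkowski symmetrization `K ↦ (K + (−K))/2`. -/
theorem stmt12 {n : ℕ} (hn : 1 ≤ n)
    (dia : ConvexBody (Euc n) → ConvexBody (Euc n))
    (hcod : ∀ K, (dia K : Set (Euc n)) = -(dia K : Set (Euc n)))
    (hmono : ∀ K L : ConvexBody (Euc n),
      (K : Set (Euc n)) ⊆ (L : Set (Euc n)) → (dia K : Set (Euc n)) ⊆ (dia L : Set (Euc n)))
    (hW : ∀ K : ConvexBody (Euc n),
      meanWidth (dia K : Set (Euc n)) = meanWidth (K : Set (Euc n)))
    (hinv : ∀ K : ConvexBody (Euc n), (K : Set (Euc n)) = -(K : Set (Euc n)) → dia K = K)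
    (htrans : ∀ (K L : ConvexBody (Euc n)) (x : Euc n),
      (K : Set (Euc n)) = -(K : Set (Euc n)) →
      (L : Set (Euc n)) = (fun y => x + y) '' (K : Set (Euc n)) → dia L = K) :
    ∀ K : ConvexBody (Euc n),
      (dia K : Set (Euc n)) = (2 : ℝ)⁻¹ • ((K : Set (Euc n)) + -(K : Set (Euc n))) := by
  intro K
  have hKc : IsCompact (K : Set (Euc n)) := K.isCompact
  have hKconv : Convex ℝ (K : Set (Euc n)) := K.convex
  have hKne : (K : Set (Euc n)).Nonempty := K.nonempty
  apply Set.Subset.antisymm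
  · -- dia K ⊆ (K + (-K))/2
    intro z hz
    by_contra hzM
    have hMcompact : IsCompact ((2 : ℝ)⁻¹ • ((K : Set (Euc n)) + -(K : Set (Euc n)))) :=
      ((hKc.add hKc.neg).smul _)
    have hMconv : Convex ℝ ((2 : ℝ)⁻¹ • ((K : Set (Euc n)) + -(K : Set (Euc n)))) :=
      ((hKconv.add hKconv.neg).smul _)
    obtain ⟨f, u, hfu, huz⟩ :=
      geometric_hahn_banach_closed_point hMconv hMcompact.isClosed hzM
    obtain ⟨a, haK, ha⟩ := hKc.exists_isMaxOn hKne f.continuous.continuousOn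
    obtain ⟨b, hbK, hb⟩ := hKc.exists_isMinOn hKne f.continuous.continuousOn
    set α : ℝ := f a with hα
    set β : ℝ := -(f b) with hβ
    have h0M : (0 : Euc n) ∈ (2 : ℝ)⁻¹ • ((K : Set (Euc n)) + -(K : Set (Euc n))) := by
      obtain ⟨k, hk⟩ := hKne
      exact ⟨k + -k, Set.add_mem_add hk (Set.neg_mem_neg.2 hk), by simp⟩
    have hfz : 0 < f z := by
      have h1 := hfu 0 h0M
      simp only [map_zero] at h1
      linarith
    set x : Euc n := ((α - β) / (2 * f z)) • z with hx
    have hfx : f x = (α - β) / 2 := by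
      rw [hx, f.map_smul]
      field_simp
      rw [smul_eq_mul, ← div_div, div_mul_cancel₀ _ hfz.ne']
      ring
    set T : Set (Euc n) := (fun y => y - x) '' (K : Set (Euc n)) with hT
    set S : Set (Euc n) := T ∪ -T with hS
    set C : Set (Euc n) := closure (convexHull ℝ S) with hC
    -- every point of S lies in the halfspace {f ≤ (α+β)/2}
    have hSh : S ⊆ {y | f y ≤ (α + β) / 2} := by
      rintro y (⟨k, hk, rfl⟩ | hy)
      · have hk' : f k ≤ α := isMaxOn_iff.mp ha k hk
        simp only [Set.mem_setOf_eq, map_sub, hfx]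
        linarith
      · rw [Set.mem_neg] at hy
        obtain ⟨k, hk, hky⟩ := hy
        have hk' : -β ≤ f k := by
          have := isMinOn_iff.mp hb k hk
          rw [hβ]; linarith
        have hyk : y = x - k := by
          have h2 := congrArg Neg.neg hky
          simpa [neg_sub] using h2.symm
        simp only [Set.mem_setOf_eq, hyk, map_sub, hfx]
        linarith
    have hhalf : Convex ℝ {y : Euc n | f y ≤ (α + β) / 2} :=
      convex_halfSpace_le (f.toLinearMap.isLinear) _
    have hCh : C ⊆ {y | f y ≤ (α + β) / 2} :=
      closure_minimal (convexHull_min hSh hhalf)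
        (isClosed_le f.continuous continuous_const)
    -- C is a symmetric convex body
    have hTb : Bornology.IsBounded T :=
      (hKc.isBounded.sub (Bornology.isBounded_singleton (x := x))).subset
        (by rintro y ⟨k, hk, rfl⟩; exact ⟨k, hk, x, rfl, rfl⟩)
    have hSb : Bornology.IsBounded S := hTb.union hTb.neg
    have hCcomp : IsCompact C :=
      Metric.isCompact_of_isClosed_isBounded isClosed_closure
        ((isBounded_convexHull.2 hSb).closure)
    have hCconv : Convex ℝ C := (convex_convexHull ℝ S).closure
    have hCne : C.Nonempty := by
      obtain ⟨k, hk⟩ := hKne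
      exact ⟨k - x, subset_closure (subset_convexHull ℝ S (Or.inl ⟨k, hk, rfl⟩))⟩
    have hSsymm : -S = S := by
      rw [hS, Set.union_neg, neg_neg, Set.union_comm]
    have hCsymm : C = -C := by
      have h5 : -C = C := by rw [hC, neg_closure, ← convexHull_neg, hSsymm]
      exact h5.symm
    set Cb : ConvexBody (Euc n) := ⟨C, hCconv, hCcomp, hCne⟩ with hCb
    set Lb : ConvexBody (Euc n) :=
      ⟨(fun y => x + y) '' C, hCconv.translate x,
        hCcomp.image (continuous_const.add continuous_id), hCne.image _⟩ with hLb
    have hdL : dia Lb = Cb := htrans Cb Lb x hCsymm rfl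
    have hKL : (K : Set (Euc n)) ⊆ (Lb : Set (Euc n)) := by
      intro k hk
      exact ⟨k - x, subset_closure (subset_convexHull ℝ S (Or.inl ⟨k, hk, rfl⟩)),
        by module⟩
    have hzC : z ∈ C := by
      have h3 := hmono K Lb hKL hz
      rw [hdL] at h3
      exact h3
    have h1 : f z ≤ (α + β) / 2 := hCh hzC
    have hmem : (2 : ℝ)⁻¹ • (a + -b) ∈
        (2 : ℝ)⁻¹ • ((K : Set (Euc n)) + -(K : Set (Euc n))) :=
      Set.smul_mem_smul_set (Set.add_mem_add haK (Set.neg_mem_neg.2 hbK))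
    have h2 : f ((2 : ℝ)⁻¹ • (a + -b)) = (α + β) / 2 := by
      rw [f.map_smul, map_add, map_neg]
      simp only [smul_eq_mul, hα, hβ]
      ring
    have h4 := hfu _ hmem
    rw [h2] at h4
    linarith
  · -- (K + (-K))/2 ⊆ dia K
    rintro z ⟨w, hw, hwz⟩
    obtain ⟨p, hp, q, hq', rfl⟩ := hw
    have hq : -q ∈ (K : Set (Euc n)) := Set.mem_neg.mp hq'
    set c : Euc n := (2 : ℝ)⁻¹ • (p + q) with hc
    have hseg_comp : ∀ u v : Euc n, IsCompact (segment ℝ u v) := by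
      intro u v
      rw [segment_eq_image ℝ u v]
      exact isCompact_Icc.image (by fun_prop)
    set S0 : ConvexBody (Euc n) :=
      ⟨segment ℝ c (-c), convex_segment _ _, hseg_comp _ _, ⟨c, left_mem_segment ℝ c (-c)⟩⟩
      with hS0
    set Sb : ConvexBody (Euc n) :=
      ⟨segment ℝ p (-q), convex_segment _ _, hseg_comp _ _, ⟨p, left_mem_segment ℝ p (-q)⟩⟩
      with hSb
    have hS0symm : (S0 : Set (Euc n)) = -(S0 : Set (Euc n)) := by
      show segment ℝ c (-c) = -(segment ℝ c (-c))
      rw [← Set.image_neg_eq_neg,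
        show Neg.neg '' segment ℝ c (-c)
            = (-(AffineMap.id ℝ (Euc n))) '' segment ℝ c (-c) from rfl,
        image_segment]
      simp [segment_symm]
    have hseg : (fun y => ((2 : ℝ)⁻¹ • (p + -q)) + y) '' segment ℝ c (-c)
        = segment ℝ p (-q) := by
      rw [segment_translate_image]
      have e1 : (2 : ℝ)⁻¹ • (p + -q) + c = p := by rw [hc]; module
      have e2 : (2 : ℝ)⁻¹ • (p + -q) + -c = -q := by rw [hc]; module
      rw [e1, e2]
    have hdS : dia Sb = S0 := htrans S0 Sb _ hS0symm hseg.symm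
    have hsub : (dia Sb : Set (Euc n)) ⊆ (dia K : Set (Euc n)) :=
      hmono Sb K (hKconv.segment_subset hp hq)
    rw [hdS] at hsub
    have hcz : c = z := by rw [hc, ← hwz]
    rw [← hcz]
    exact hsub (left_mem_segment ℝ c (-c))
end
end

section
/- Let H ∈ G_{n,i}, ◇ : 𝒦ⁿₙ → 𝒦ⁿ_{n,H} a monotonic symmetrization with natural extension ◇̄K = ⋂_{m≥1} ◇(K + (1/m)B). Suppose there exists a strictly monotonic, Hausdorff-continuous set function F : 𝒦ⁿₙ → ℝ with F(◇K) = F(K) for all convex bodies K. Then ◇̄K = ◇K for all convex bodies K. -/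
open Set MeasureTheory Metric Pointwise

noncomputable section

/-- Lemma on the natural extension, (i): if `◇ : 𝒦ⁿₙ → 𝒦ⁿ_{n,H}` is a
monotonic symmetrization and there is a strictly monotonic, Hausdorff-continuous set
function `F : 𝒦ⁿₙ → ℝ` with `F(◇K) = F(K)`, then the natural extension
`◇̄K = ⋂_m ◇(K + (1/m)B)` agrees with `◇` on convex bodies.
(The metric on convex bodies is the Hausdorff metric.) -/
theorem stmt17 {n i : ℕ}
    (H : Submodule ℝ (Euc n)) (hHr : Module.finrank ℝ H = i)
    (dia : FullBody n → ConvexBody (Euc n))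
    (hcod : ∀ K, SymmWrt H (dia K : Set (Euc n)) ∧ (interior (dia K : Set (Euc n))).Nonempty)
    (hmono : ∀ K L : FullBody n,
      (K.1 : Set (Euc n)) ⊆ (L.1 : Set (Euc n)) → (dia K : Set (Euc n)) ⊆ (dia L : Set (Euc n)))
    (F : FullBody n → ℝ)
    (hFcont : Continuous F)
    (hFmono : ∀ K L : FullBody n, (K.1 : Set (Euc n)) ⊂ (L.1 : Set (Euc n)) → F K < F L)
    (hFpres : ∀ K : FullBody n, F ⟨dia K, (hcod K).2⟩ = F K) :
    ∀ (K : FullBody n) (Km : ℕ → FullBody n),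
      (∀ m : ℕ, ((Km m).1 : Set (Euc n))
        = (K.1 : Set (Euc n)) + closedBall (0 : Euc n) (1 / (m + 1))) →
      (⋂ m : ℕ, (dia (Km m) : Set (Euc n))) = (dia K : Set (Euc n)) := by
  intro K Km hKm
  -- K ⊆ Km m
  have hsub : ∀ m, (K.1 : Set (Euc n)) ⊆ ((Km m).1 : Set (Euc n)) := by
    intro m x hx
    rw [hKm m]
    exact ⟨x, hx, 0, by simp [Nat.cast_add_one_pos m |>.le], by simp⟩
  have hdsub : ∀ m, (dia K : Set (Euc n)) ⊆ (dia (Km m) : Set (Euc n)) := fun m =>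
    hmono _ _ (hsub m)
  have hsup : (dia K : Set (Euc n)) ⊆ ⋂ m, (dia (Km m) : Set (Euc n)) :=
    subset_iInter hdsub
  -- D as a full body
  set D : Set (Euc n) := ⋂ m, (dia (Km m) : Set (Euc n)) with hD
  have hDcomp : IsCompact D :=
    (dia (Km 0)).isCompact.of_isClosed_subset
      (isClosed_iInter fun m => (dia (Km m)).isCompact.isClosed) (iInter_subset _ 0)
  have hDconv : Convex ℝ D := convex_iInter fun m => (dia (Km m)).convex
  have hDne : D.Nonempty := ((hcod K).2.mono interior_subset).mono hsup
  set Db : ConvexBody (Euc n) := ⟨D, hDconv, hDcomp, hDne⟩ with hDb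
  have hDint : (interior (Db : Set (Euc n))).Nonempty := (hcod K).2.mono (interior_mono hsup)
  set Df : FullBody n := ⟨Db, hDint⟩ with hDf
  -- convergence Km → K
  have hconv : Filter.Tendsto Km Filter.atTop (nhds K) := by
    rw [tendsto_iff_dist_tendsto_zero]
    simp only [Subtype.dist_eq]
    have hle : ∀ m : ℕ, dist (Km m).1 K.1 ≤ 1 / (m + 1) := by
      intro m
      rw [← ConvexBody.hausdorffDist_coe]
      apply hausdorffDist_le_of_mem_dist (by positivity)
      · intro x hx
        rw [hKm m] at hx
        obtain ⟨y, hy, b, hb, rfl⟩ := hx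
        exact ⟨y, hy, by simpa [dist_eq_norm] using mem_closedBall_zero_iff.mp hb⟩
      · intro x hx
        exact ⟨x, hsub m hx, by simp [Nat.cast_add_one_pos m |>.le]⟩
    refine squeeze_zero (fun m => dist_nonneg) hle ?_
    exact tendsto_one_div_add_atTop_nhds_zero_nat
  -- F D ≤ F K
  have hFle : ∀ m, F Df ≤ F (Km m) := by
    intro m
    rw [← hFpres (Km m)]
    rcases eq_or_ssubset_of_subset (show (Df.1 : Set (Euc n)) ⊆ (dia (Km m) : Set (Euc n)) from
      iInter_subset _ m) with h | h
    · exact le_of_eq (congrArg F (Subtype.ext (ConvexBody.ext h)))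
    · exact (hFmono _ _ h).le
  have hFDK : F Df ≤ F K := by
    have : Filter.Tendsto (fun m => F (Km m)) Filter.atTop (nhds (F K)) :=
      (hFcont.tendsto K).comp hconv
    exact le_of_tendsto_of_tendsto' tendsto_const_nhds this hFle
  -- conclude D ⊆ dia K
  refine Subset.antisymm ?_ hsup
  by_contra hne
  have hss : (dia K : Set (Euc n)) ⊂ D := ⟨hsup, hne⟩
  have : F ⟨dia K, (hcod K).2⟩ < F Df := hFmono _ _ hss
  rw [hFpres K] at this
  exact absurd (this.trans_le hFDK) (lt_irrefl _)
end
end
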